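/- Let N ≥ 2 and let g : ℝ → ℝ be strictly convex and nonincreasing on the interval (0, π]. For s, t ∈ [0, 2π) let d(s, t) := min(|s − t|, 2π − |s − t|) denote the geodesic distance on a loop of circumference 2π. Then for any points 0 ≤ y₁ < y₂ < ⋯ < y_N < 2π one has ∑_{1 ≤ j < j' ≤ N} g(d(y_j, y_{j'})) ≥ ∑_{1 ≤ j < j' ≤ N} g((2π/N)·min(j' − j, N − (j' − j))), and the inequality is strict unless all N cyclic gaps y₂ − y₁, …, y_N − y_{N−1}, 2π − y_N + y₁ are equal to 2π/N. -/

import Mathlib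

/-- Periodic extension of a configuration `y` on the loop of circumference `2π`:
`periodicExt y (j + N) = periodicExt y j + 2π`, and `periodicExt y j = y j` for `j < N`. -/
noncomputable def periodicExt {N : ℕ} (y : Fin N → ℝ) (k : ℕ) : ℝ :=
  if h : 0 < N then y ⟨k % N, Nat.mod_lt k h⟩ + 2 * Real.pi * (k / N : ℕ) else 0

/-- The `j`-th cyclic gap of the configuration `y` on the loop of circumference `2π`:
for `j < N - 1` it is `y (j+1) - y j`, and for `j = N - 1` it is `2π - y (N-1) + y 0`. -/
noncomputable def cyclicGap {N : ℕ} (y : Fin N → ℝ) (j : Fin N) : ℝ :=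
  periodicExt y ((j : ℕ) + 1) - periodicExt y (j : ℕ)

/-- A configuration is congruent to the equidistant one iff all cyclic gaps are `2π/N`. -/
def isEquidistant {N : ℕ} (y : Fin N → ℝ) : Prop :=
  ∀ j : Fin N, cyclicGap y j = 2 * Real.pi / N



open Finset


open Finset

noncomputable def circDist (t : ℝ) : ℝ := min t (2 * Real.pi - t)

lemma circDist_eq (t : ℝ) : circDist t = Real.pi - |t - Real.pi| := by
  unfold circDist
  rcases le_total t Real.pi with h | h
  · rw [min_eq_left (by linarith), abs_of_nonpos (by linarith)]; ring
  · rw [min_eq_right (by linarith), abs_of_nonneg (by linarith)]; ring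

lemma circDist_symm (t : ℝ) : circDist (2 * Real.pi - t) = circDist t := by
  unfold circDist
  rw [show 2 * Real.pi - (2 * Real.pi - t) = t by ring, min_comm]

lemma circDist_mem {t : ℝ} (h : t ∈ Set.Ioo 0 (2 * Real.pi)) :
    circDist t ∈ Set.Ioc 0 Real.pi := by
  obtain ⟨h1, h2⟩ := h
  rw [circDist_eq]
  constructor
  · rcases abs_cases (t - Real.pi) with ⟨he, _⟩ | ⟨he, _⟩ <;> rw [he] <;> linarith
  · have := abs_nonneg (t - Real.pi); linarith

lemma strictAntiOn_of_convex {g : ℝ → ℝ}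
    (hconv : StrictConvexOn ℝ (Set.Ioc 0 Real.pi) g)
    (hanti : AntitoneOn g (Set.Ioc 0 Real.pi)) :
    StrictAntiOn g (Set.Ioc 0 Real.pi) := by
  intro u hu v hv huv
  by_contra hcon
  push_neg at hcon
  have heq : g u = g v := le_antisymm hcon (hanti hu hv huv.le)
  have hwmem : (1/2 : ℝ) * u + (1/2) * v ∈ Set.Ioc 0 Real.pi := by
    constructor
    · nlinarith [hu.1, hv.1]
    · nlinarith [hu.2, hv.2]
  have hlt := hconv.2 hu hv huv.ne (by norm_num : (0:ℝ) < 1/2) (by norm_num : (0:ℝ) < 1/2)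
    (by norm_num)
  simp only [smul_eq_mul] at hlt
  have hle := hanti hwmem hv (by linarith [huv.le])
  rw [heq] at hlt
  linarith

lemma f_strictConvex {g : ℝ → ℝ}
    (hconv : StrictConvexOn ℝ (Set.Ioc 0 Real.pi) g)
    (hanti : AntitoneOn g (Set.Ioc 0 Real.pi)) :
    StrictConvexOn ℝ (Set.Ioo 0 (2 * Real.pi)) (fun t => g (circDist t)) := by
  have hsa := strictAntiOn_of_convex hconv hanti
  refine ⟨convex_Ioo _ _, ?_⟩
  intro x hx z hz hxz a b ha hb hab
  simp only [smul_eq_mul]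
  have habp : a * Real.pi + b * Real.pi = Real.pi := by linear_combination Real.pi * hab
  have hab2p : a * (2 * Real.pi) + b * (2 * Real.pi) = 2 * Real.pi := by
    linear_combination 2 * Real.pi * hab
  have hwmem : a * x + b * z ∈ Set.Ioo 0 (2 * Real.pi) := by
    constructor
    · nlinarith [mul_pos ha hx.1, mul_pos hb hz.1]
    · have u1 := mul_lt_mul_of_pos_left hx.2 ha
      have u2 := mul_lt_mul_of_pos_left hz.2 hb
      linarith
  have hcx := circDist_mem hx
  have hcz := circDist_mem hz
  have hcw := circDist_mem hwmem
  have hcomb : a * circDist x + b * circDist z ∈ Set.Ioc 0 Real.pi := by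
    constructor
    · nlinarith [mul_pos ha hcx.1, mul_pos hb hcz.1]
    · have u1 := mul_le_mul_of_nonneg_left hcx.2 ha.le
      have u2 := mul_le_mul_of_nonneg_left hcz.2 hb.le
      linarith
  have hkey : a * circDist x + b * circDist z ≤ circDist (a * x + b * z) := by
    rw [circDist_eq, circDist_eq, circDist_eq]
    have h1 : a * x + b * z - Real.pi = a * (x - Real.pi) + b * (z - Real.pi) := by
      linear_combination Real.pi * hab
    have h2 : |a * x + b * z - Real.pi| ≤ a * |x - Real.pi| + b * |z - Real.pi| := by
      rw [h1]
      calc |a * (x - Real.pi) + b * (z - Real.pi)|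
          ≤ |a * (x - Real.pi)| + |b * (z - Real.pi)| := abs_add_le _ _
        _ = a * |x - Real.pi| + b * |z - Real.pi| := by
            rw [abs_mul, abs_mul, abs_of_pos ha, abs_of_pos hb]
    linarith [h2]
  rcases eq_or_ne (circDist x) (circDist z) with hcc | hcc
  · -- symmetric case: x + z = 2π, strict gain from strict antitonicity
    have h1 : |x - Real.pi| = |z - Real.pi| := by
      have e1 := circDist_eq x
      have e2 := circDist_eq z
      rw [e1, e2] at hcc
      linarith
    have hzx : x + z = 2 * Real.pi := by
      rcases abs_eq_abs.mp h1 with h | h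
      · exact absurd (by linarith : x = z) hxz
      · linarith
    have hxpi : x ≠ Real.pi := by
      intro h
      apply hxz
      rw [h] at hzx ⊢
      linarith
    have hlt : circDist x < circDist (a * x + b * z) := by
      rw [circDist_eq x, circDist_eq (a * x + b * z)]
      have h2 : a * x + b * z - Real.pi = (a - b) * (x - Real.pi) := by
        have h4 : z = 2 * Real.pi - x := by linarith
        rw [h4]; linear_combination Real.pi * hab
      rw [h2, abs_mul]
      have hpos : 0 < |x - Real.pi| := abs_pos.mpr (sub_ne_zero.mpr hxpi)
      have hab1 : |a - b| < 1 := by rw [abs_lt]; constructor <;> linarith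
      have := mul_lt_of_lt_one_left hpos hab1
      linarith
    have hconst : a * g (circDist x) + b * g (circDist z) = g (circDist x) := by
      rw [← hcc]; linear_combination g (circDist x) * hab
    rw [hconst]
    exact hsa hcx hcw hlt
  · have h1 : g (circDist (a * x + b * z)) ≤ g (a * circDist x + b * circDist z) :=
      hanti hcomb hcw hkey
    have h2 := hconv.2 hcx hcz hcc ha hb hab
    simp only [smul_eq_mul] at h2
    linarith






lemma periodicExt_eq {N : ℕ} (hN : 0 < N) (y : Fin N → ℝ) (k : ℕ) :
    periodicExt y k = y ⟨k % N, Nat.mod_lt k hN⟩ + 2 * Real.pi * (k / N : ℕ) := dif_pos hN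

lemma periodicExt_of_lt {N : ℕ} (hN : 0 < N) (y : Fin N → ℝ) {k : ℕ} (hk : k < N) :
    periodicExt y k = y ⟨k, hk⟩ := by
  rw [periodicExt_eq hN]
  have h1 : k % N = k := Nat.mod_eq_of_lt hk
  have h2 : k / N = 0 := Nat.div_eq_of_lt hk
  simp only [h1, h2, Nat.cast_zero, mul_zero, add_zero]

lemma periodicExt_add {N : ℕ} (hN : 0 < N) (y : Fin N → ℝ) (k : ℕ) :
    periodicExt y (k + N) = periodicExt y k + 2 * Real.pi := by
  rw [periodicExt_eq hN, periodicExt_eq hN]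
  have h1 : (k + N) % N = k % N := Nat.add_mod_right k N
  have h2 : (k + N) / N = k / N + 1 := Nat.add_div_right k hN
  simp only [h1, h2]
  push_cast
  ring

lemma periodicExt_strictMono {N : ℕ} (hN : 1 < N) {y : Fin N → ℝ}
    (hmono : StrictMono y) (hmem : ∀ j, y j ∈ Set.Ico 0 (2 * Real.pi)) :
    StrictMono (periodicExt y) := by
  have hN0 : 0 < N := by omega
  apply strictMono_nat_of_lt_succ
  intro k
  rw [periodicExt_eq hN0, periodicExt_eq hN0]
  have hklt : k % N < N := Nat.mod_lt k hN0
  rcases lt_or_ge (k % N + 1) N with h | h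
  · have h1 : (k + 1) % N = k % N + 1 := by
      rw [Nat.add_mod, Nat.mod_eq_of_lt (show 1 < N by omega), Nat.mod_eq_of_lt h]
    have h2 : (k + 1) / N = k / N := by
      rw [Nat.succ_div, if_neg, add_zero]
      intro hdvd
      have := (Nat.dvd_iff_mod_eq_zero).mp hdvd
      omega
    simp only [h1, h2]
    have hy := hmono (show (⟨k % N, hklt⟩ : Fin N) < ⟨k % N + 1, h⟩ by
      simp [Fin.mk_lt_mk])
    linarith
  · have hr : k % N + 1 = N := by omega
    have h1 : (k + 1) % N = 0 := by
      rw [Nat.add_mod, Nat.mod_eq_of_lt hN, hr, Nat.mod_self]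
    have h2 : (k + 1) / N = k / N + 1 := by
      rw [Nat.succ_div, if_pos (Nat.dvd_of_mod_eq_zero h1)]
    simp only [h1, h2]
    have hy1 : y ⟨k % N, hklt⟩ < 2 * Real.pi := (hmem _).2
    have hy0 : (0:ℝ) ≤ y ⟨0, hN0⟩ := (hmem _).1
    push_cast
    nlinarith [Real.pi_pos]





lemma sum_periodicExt_shift {N : ℕ} (hN : 0 < N) (y : Fin N → ℝ) (m : ℕ) :
    ∑ j ∈ range N, (periodicExt y (j + m) - periodicExt y j) = 2 * Real.pi * m := by
  induction m with
  | zero => simp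
  | succ m ih =>
    have tele : ∑ j ∈ range N,
        (periodicExt y (j + 1 + m) - periodicExt y (j + m))
          = periodicExt y (N + m) - periodicExt y (0 + m) :=
      Finset.sum_range_sub (fun j => periodicExt y (j + m)) N
    have step : ∑ j ∈ range N, (periodicExt y (j + (m + 1)) - periodicExt y j)
        = ∑ j ∈ range N, ((periodicExt y (j + 1 + m) - periodicExt y (j + m))
            + (periodicExt y (j + m) - periodicExt y j)) := by
      apply Finset.sum_congr rfl
      intro j _
      have e : j + (m + 1) = j + 1 + m := by omega
      rw [e]; ring
    rw [step, Finset.sum_add_distrib, tele, ih, Nat.zero_add,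
      show N + m = m + N by omega, periodicExt_add hN]
    push_cast
    ring

lemma doubling_lemma {N : ℕ} (H : Fin N × Fin N → ℝ)
    (hsym : ∀ a b : Fin N, H (a, b) = H (b, a)) :
    ∑ p ∈ univ.filter (fun p : Fin N × Fin N => p.1 ≠ p.2), H p
      = 2 * ∑ p ∈ univ.filter (fun p : Fin N × Fin N => p.1 < p.2), H p := by
  have hsplit : univ.filter (fun p : Fin N × Fin N => p.1 ≠ p.2)
      = univ.filter (fun p : Fin N × Fin N => p.1 < p.2)
        ∪ univ.filter (fun p : Fin N × Fin N => p.2 < p.1) := by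
    ext p
    simp only [Finset.mem_filter, Finset.mem_union, Finset.mem_univ, true_and]
    exact ne_iff_lt_or_gt
  have hdisj : Disjoint (univ.filter (fun p : Fin N × Fin N => p.1 < p.2))
      (univ.filter (fun p : Fin N × Fin N => p.2 < p.1)) := by
    rw [Finset.disjoint_left]
    intro p h1 h2
    simp only [Finset.mem_filter] at h1 h2
    exact absurd h2.2 (not_lt.mpr h1.2.le)
  rw [hsplit, Finset.sum_union hdisj]
  have hswap : ∑ p ∈ univ.filter (fun p : Fin N × Fin N => p.2 < p.1), H p
      = ∑ p ∈ univ.filter (fun p : Fin N × Fin N => p.1 < p.2), H p := by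
    apply Finset.sum_nbij' Prod.swap Prod.swap
    · intro p hp; simp only [Finset.mem_filter, Finset.mem_univ, true_and] at hp ⊢
      exact hp
    · intro p hp; simp only [Finset.mem_filter, Finset.mem_univ, true_and] at hp ⊢
      exact hp
    · intro p _; exact Prod.swap_swap p
    · intro p _; exact Prod.swap_swap p
    · intro p _; rw [show H p = H (p.1, p.2) from rfl, hsym]; rfl
  linarith

open Fin.NatCast in
lemma bij_lemma {N : ℕ} [NeZero N] (H : Fin N × Fin N → ℝ) (K : ℕ × Fin N → ℝ)
    (h : ∀ m ∈ Finset.Ico 1 N, ∀ j : Fin N, K (m, j) = H (j, j + (m : Fin N))) :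
    ∑ q ∈ (Finset.Ico 1 N) ×ˢ (univ : Finset (Fin N)), K q
      = ∑ p ∈ univ.filter (fun p : Fin N × Fin N => p.1 ≠ p.2), H p := by
  have hN : 0 < N := Nat.pos_of_ne_zero (NeZero.ne N)
  apply Finset.sum_nbij' (fun q : ℕ × Fin N => (q.2, q.2 + (q.1 : Fin N)))
    (fun p : Fin N × Fin N => (((p.2 - p.1 : Fin N) : ℕ), p.1))
  · intro q hq
    simp only [Finset.mem_product, Finset.mem_Ico, Finset.mem_univ, and_true] at hq
    simp only [Finset.mem_filter, Finset.mem_univ, true_and]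
    intro heq
    have h0 : ((q.1 : ℕ) : Fin N) = 0 :=
      (add_left_cancel (a := q.2) (show q.2 + ((q.1:ℕ) : Fin N) = q.2 + 0 by
        rw [add_zero, ← heq]))
    rw [Fin.natCast_eq_zero] at h0
    have := Nat.le_of_dvd (by omega) h0
    omega
  · intro p hp
    simp only [Finset.mem_filter, Finset.mem_univ, true_and] at hp
    simp only [Finset.mem_product, Finset.mem_Ico, Finset.mem_univ, and_true]
    refine ⟨?_, (p.2 - p.1 : Fin N).isLt⟩
    have hne : (p.2 - p.1 : Fin N) ≠ 0 := sub_ne_zero_of_ne (Ne.symm hp)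
    have : ((p.2 - p.1 : Fin N) : ℕ) ≠ 0 := by
      intro h0; exact hne (Fin.ext (by simpa using h0))
    omega
  · intro q hq
    simp only [Finset.mem_product, Finset.mem_Ico, Finset.mem_univ, and_true] at hq
    have e1 : (q.2 + ((q.1:ℕ) : Fin N) - q.2) = ((q.1:ℕ) : Fin N) := by
      rw [add_comm, add_sub_cancel_right]
    rw [e1]
    have e2 : (((q.1:ℕ) : Fin N) : ℕ) = q.1 := by
      rw [Fin.val_natCast, Nat.mod_eq_of_lt hq.2]
    rw [e2]
  · intro p hp
    have e1 : ((((p.2 - p.1 : Fin N) : ℕ)) : Fin N) = p.2 - p.1 := Fin.cast_val_eq_self _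
    rw [e1]
    have e2 : p.1 + (p.2 - p.1) = p.2 := by rw [add_comm, sub_add_cancel]
    rw [e2]
  · intro q hq
    simp only [Finset.mem_product, Finset.mem_Ico, Finset.mem_univ, and_true] at hq
    exact h q.1 (Finset.mem_Ico.mpr hq) q.2

open Fin.NatCast in
/-- Let N ≥ 2 and let g : ℝ → ℝ be strictly convex and nonincreasing
on the interval (0, π]. For s, t ∈ [0, 2π) let d(s, t) := min(|s − t|, 2π − |s − t|)
denote the geodesic distance on a loop of circumference 2π. Then for any points
0 ≤ y₁ < y₂ < ⋯ < y_N < 2π one has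
∑_{j<j'} g(d(y_j, y_{j'})) ≥ ∑_{j<j'} g((2π/N)·min(j'−j, N−(j'−j))),
and the inequality is strict unless all N cyclic gaps are equal to 2π/N. -/
theorem loop_convex_energy_min (N : ℕ) (hN : 2 ≤ N) (g : ℝ → ℝ)
    (hconv : StrictConvexOn ℝ (Set.Ioc 0 Real.pi) g)
    (hanti : AntitoneOn g (Set.Ioc 0 Real.pi))
    (y : Fin N → ℝ) (hmono : StrictMono y)
    (hmem : ∀ j, y j ∈ Set.Ico 0 (2 * Real.pi)) :
    (∑ p ∈ Finset.univ.filter (fun p : Fin N × Fin N => p.1 < p.2),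
        g (min |y p.1 - y p.2| (2 * Real.pi - |y p.1 - y p.2|)))
      ≥ (∑ p ∈ Finset.univ.filter (fun p : Fin N × Fin N => p.1 < p.2),
          g ((2 * Real.pi / N) *
            ((min ((p.2 : ℕ) - (p.1 : ℕ)) (N - ((p.2 : ℕ) - (p.1 : ℕ))) : ℕ) : ℝ))) ∧
    (¬ isEquidistant y →
      (∑ p ∈ Finset.univ.filter (fun p : Fin N × Fin N => p.1 < p.2),
          g (min |y p.1 - y p.2| (2 * Real.pi - |y p.1 - y p.2|)))
        > (∑ p ∈ Finset.univ.filter (fun p : Fin N × Fin N => p.1 < p.2),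
            g ((2 * Real.pi / N) *
              ((min ((p.2 : ℕ) - (p.1 : ℕ)) (N - ((p.2 : ℕ) - (p.1 : ℕ))) : ℕ) : ℝ)))) := by
  haveI : NeZero N := ⟨by omega⟩
  have hN0 : 0 < N := by omega
  have hN1 : 1 < N := by omega
  have hπ := Real.pi_pos
  have hNR : (0 : ℝ) < (N : ℝ) := by exact_mod_cast hN0
  have hNne : (N : ℝ) ≠ 0 := ne_of_gt hNR
  set f : ℝ → ℝ := fun t => g (circDist t) with hfdef
  have hfconv : StrictConvexOn ℝ (Set.Ioo 0 (2 * Real.pi)) f := f_strictConvex hconv hanti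
  have hxmono : StrictMono (periodicExt y) := periodicExt_strictMono hN1 hmono hmem
  set D : Fin N → ℕ → ℝ :=
    fun j m => periodicExt y ((j : ℕ) + m) - periodicExt y (j : ℕ) with hDdef
  -- basic facts about D
  have hDmem : ∀ (j : Fin N), ∀ m ∈ Finset.Ico 1 N, D j m ∈ Set.Ioo 0 (2 * Real.pi) := by
    intro j m hm
    rw [Finset.mem_Ico] at hm
    constructor
    · have h1 := hxmono (show (j : ℕ) < (j : ℕ) + m by omega)
      simp only [hDdef]
      linarith
    · have h1 : periodicExt y ((j : ℕ) + m) < periodicExt y ((j : ℕ) + N) :=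
        hxmono (by omega)
      have h2 : periodicExt y ((j : ℕ) + N) = periodicExt y (j : ℕ) + 2 * Real.pi :=
        periodicExt_add hN0 y (j : ℕ)
      simp only [hDdef]
      linarith
  have hDsum : ∀ m : ℕ, ∑ j : Fin N, D j m = 2 * Real.pi * m := by
    intro m
    have h1 : ∑ j : Fin N, D j m
        = ∑ j ∈ Finset.range N, (periodicExt y (j + m) - periodicExt y j) :=
      Fin.sum_univ_eq_sum_range (fun k => periodicExt y (k + m) - periodicExt y k) N
    rw [h1]
    exact sum_periodicExt_shift hN0 y m
  -- Jensen machinery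
  have hwsum : ∑ _j : Fin N, (N : ℝ)⁻¹ = 1 := by
    rw [Finset.sum_const, Finset.card_univ, Fintype.card_fin, nsmul_eq_mul]
    field_simp
  have hmean : ∀ m : ℕ, ∑ j : Fin N, ((N : ℝ)⁻¹ • D j m) = 2 * Real.pi * m / N := by
    intro m
    rw [← Finset.smul_sum, hDsum m, smul_eq_mul]
    field_simp
  have hmulsum : ∀ m : ℕ, ∑ j : Fin N, (N : ℝ)⁻¹ • f (D j m)
      = (N : ℝ)⁻¹ * ∑ j : Fin N, f (D j m) := by
    intro m
    rw [← Finset.smul_sum, smul_eq_mul]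
  have hJ : ∀ m ∈ Finset.Ico 1 N,
      (N : ℝ) * f (2 * Real.pi * m / N) ≤ ∑ j : Fin N, f (D j m) := by
    intro m hm
    have h1 := hfconv.convexOn.map_sum_le (t := Finset.univ) (w := fun _ => (N : ℝ)⁻¹)
      (p := fun j => D j m) (fun i _ => by positivity) hwsum (fun i _ => hDmem i m hm)
    rw [hmean m, hmulsum m] at h1
    calc (N : ℝ) * f (2 * Real.pi * m / N)
        ≤ (N : ℝ) * ((N : ℝ)⁻¹ * ∑ j : Fin N, f (D j m)) :=
          mul_le_mul_of_nonneg_left h1 hNR.le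
      _ = ∑ j : Fin N, f (D j m) := by field_simp
  have hJs : (∃ j k : Fin N, D j 1 ≠ D k 1) →
      (N : ℝ) * f (2 * Real.pi * ((1:ℕ):ℝ) / N) < ∑ j : Fin N, f (D j 1) := by
    rintro ⟨j, k, hjk⟩
    have hm1 : (1 : ℕ) ∈ Finset.Ico 1 N := Finset.mem_Ico.mpr ⟨le_refl 1, hN1⟩
    have h1 := hfconv.map_sum_lt (t := Finset.univ) (w := fun _ => (N : ℝ)⁻¹)
      (p := fun j => D j 1) (fun i _ => by positivity) hwsum (fun i _ => hDmem i 1 hm1)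
      ⟨j, Finset.mem_univ j, k, Finset.mem_univ k, hjk⟩
    rw [hmean 1, hmulsum 1] at h1
    calc (N : ℝ) * f (2 * Real.pi * ((1:ℕ):ℝ) / N)
        < (N : ℝ) * ((N : ℝ)⁻¹ * ∑ j : Fin N, f (D j 1)) := by
          exact (mul_lt_mul_iff_right₀ hNR).mpr h1
      _ = ∑ j : Fin N, f (D j 1) := by field_simp
  -- per-element identifications
  have perA : ∀ m ∈ Finset.Ico 1 N, ∀ j : Fin N,
      f (D j m) = g (min |y j - y (j + (m : Fin N))|
        (2 * Real.pi - |y j - y (j + (m : Fin N))|)) := by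
    intro m hm j
    rw [Finset.mem_Ico] at hm
    set j' : Fin N := j + (m : Fin N) with hj'
    have hval : (j' : ℕ) = ((j : ℕ) + m) % N := by
      rw [hj', Fin.val_add, Fin.val_natCast, Nat.mod_eq_of_lt hm.2]
    have hxj : periodicExt y (j : ℕ) = y j := by
      rw [periodicExt_of_lt hN0 y j.isLt]
    have hjlt := j.isLt
    rcases lt_or_ge ((j : ℕ) + m) N with h | h
    · have hv : (j' : ℕ) = (j : ℕ) + m := by rw [hval, Nat.mod_eq_of_lt h]
      have hxjm : periodicExt y ((j : ℕ) + m) = y j' := by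
        rw [periodicExt_of_lt hN0 y h]
        exact congrArg y (Fin.ext hv.symm)
      have hyy : y j < y j' := hmono (show j < j' by rw [Fin.lt_def, hv]; omega)
      have hDval : D j m = y j' - y j := by simp only [hDdef]; rw [hxjm, hxj]
      have habs : |y j - y j'| = D j m := by
        rw [hDval, abs_sub_comm, abs_of_pos (by linarith : (0:ℝ) < y j' - y j)]
      rw [habs]
      rfl
    · have hvlt : (j : ℕ) + m - N < N := by omega
      have hv : (j' : ℕ) = (j : ℕ) + m - N := by
        rw [hval, Nat.mod_eq_sub_mod h, Nat.mod_eq_of_lt hvlt]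
      have hxjm : periodicExt y ((j : ℕ) + m) = y j' + 2 * Real.pi := by
        rw [show (j : ℕ) + m = ((j : ℕ) + m - N) + N by omega, periodicExt_add hN0,
          periodicExt_of_lt hN0 y hvlt]
        have e : (⟨(j : ℕ) + m - N, hvlt⟩ : Fin N) = j' := Fin.ext hv.symm
        rw [e]
      have hjpos : (j' : ℕ) < (j : ℕ) := by omega
      have hyy : y j' < y j := hmono (Fin.lt_def.mpr hjpos)
      have hDval : D j m = 2 * Real.pi - (y j - y j') := by
        simp only [hDdef]; rw [hxjm, hxj]; ring
      have habs : |y j - y j'| = y j - y j' :=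
        abs_of_pos (by linarith : (0:ℝ) < y j - y j')
      rw [habs]
      show g (circDist (D j m)) = g (min (y j - y j') (2 * Real.pi - (y j - y j')))
      congr 1
      rw [hDval, circDist_symm]
      rfl
  have perB : ∀ m ∈ Finset.Ico 1 N, ∀ j : Fin N,
      f (2 * Real.pi * m / N)
        = f (2 * Real.pi * (((j + (m : Fin N)) - j : Fin N) : ℕ) / N) := by
    intro m hm j
    rw [Finset.mem_Ico] at hm
    have e1 : (j + (m : Fin N) - j) = (m : Fin N) := by rw [add_comm, add_sub_cancel_right]
    rw [e1, Fin.val_natCast, Nat.mod_eq_of_lt hm.2]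
  -- symmetry of the two pair functions
  have symF : ∀ a b : Fin N,
      g (min |y a - y b| (2 * Real.pi - |y a - y b|))
        = g (min |y b - y a| (2 * Real.pi - |y b - y a|)) := by
    intro a b; rw [abs_sub_comm]
  have fsymm : ∀ v : ℕ, v ≤ N → f (2 * Real.pi * v / N) = f (2 * Real.pi * (N - v : ℕ) / N) := by
    intro v hv
    show g (circDist (2 * Real.pi * v / N)) = g (circDist (2 * Real.pi * (N - v : ℕ) / N))
    congr 1
    have e1 : ((N - v : ℕ) : ℝ) = (N : ℝ) - v := by
      rw [Nat.cast_sub hv]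
    rw [e1, show 2 * Real.pi * ((N : ℝ) - v) / N = 2 * Real.pi - 2 * Real.pi * v / N by
      field_simp, circDist_symm]
  have symG : ∀ a b : Fin N,
      f (2 * Real.pi * ((b - a : Fin N) : ℕ) / N)
        = f (2 * Real.pi * ((a - b : Fin N) : ℕ) / N) := by
    intro a b
    rcases eq_or_ne a b with rfl | hab
    · rfl
    · have h1 : (a - b : Fin N) = -(b - a) := (neg_sub _ _).symm
      have hne : (b - a : Fin N) ≠ 0 := sub_ne_zero_of_ne (Ne.symm hab)
      have hvpos : 0 < ((b - a : Fin N) : ℕ) := by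
        rcases Nat.eq_zero_or_pos ((b - a : Fin N) : ℕ) with h0 | h0
        · exact absurd (Fin.ext (by simpa using h0)) hne
        · exact h0
      have h2 : ((-(b - a) : Fin N) : ℕ) = N - ((b - a : Fin N) : ℕ) := by
        rw [Fin.coe_neg, Nat.mod_eq_of_lt (by omega)]
      rw [h1, h2]
      exact fsymm _ (by omega)
  -- identification of G with the RHS summand on increasing pairs
  have hGR : ∀ p : Fin N × Fin N, p.1 < p.2 →
      f (2 * Real.pi * ((p.2 - p.1 : Fin N) : ℕ) / N)
        = g ((2 * Real.pi / N) *
            ((min ((p.2 : ℕ) - (p.1 : ℕ)) (N - ((p.2 : ℕ) - (p.1 : ℕ))) : ℕ) : ℝ)) := by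
    intro p hp
    have hple : (p.1 : ℕ) ≤ (p.2 : ℕ) := (Fin.lt_def.mp hp).le
    have hval : ((p.2 - p.1 : Fin N) : ℕ) = (p.2 : ℕ) - (p.1 : ℕ) :=
      Fin.coe_sub_iff_le.mpr hp.le
    set k := (p.2 : ℕ) - (p.1 : ℕ) with hk
    have hk1 : 1 ≤ k := by
      have := Fin.lt_def.mp hp; omega
    have hk2 : k < N := by
      have := p.2.isLt; omega
    rw [hval]
    show g (circDist (2 * Real.pi * k / N)) = _
    have hcast : ((min k (N - k) : ℕ) : ℝ) = min (k : ℝ) ((N : ℝ) - k) := by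
      rw [Nat.cast_min, Nat.cast_sub hk2.le]
    rw [hcast]
    congr 1
    have hsum2 : 2 * Real.pi - 2 * Real.pi * k / N = 2 * Real.pi * ((N : ℝ) - k) / N := by
      field_simp
    rcases le_total (k : ℝ) ((N : ℝ) - k) with h | h
    · rw [min_eq_left h]
      have hle : 2 * Real.pi * k / N ≤ 2 * Real.pi - 2 * Real.pi * k / N := by
        rw [hsum2, div_le_div_iff₀ hNR hNR]
        nlinarith [mul_le_mul_of_nonneg_right (mul_le_mul_of_nonneg_left h
          (by positivity : (0:ℝ) ≤ 2 * Real.pi)) hNR.le]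
      unfold circDist
      rw [min_eq_left hle]
      ring
    · rw [min_eq_right h]
      have hle : 2 * Real.pi - 2 * Real.pi * k / N ≤ 2 * Real.pi * k / N := by
        rw [hsum2, div_le_div_iff₀ hNR hNR]
        nlinarith [mul_le_mul_of_nonneg_right (mul_le_mul_of_nonneg_left h
          (by positivity : (0:ℝ) ≤ 2 * Real.pi)) hNR.le]
      unfold circDist
      rw [min_eq_right (by linarith : 2 * Real.pi - 2 * Real.pi * k / N ≤ 2 * Real.pi * k / N)]
      rw [hsum2]
      ring
  -- the two global double-counting identities
  have hA : ∑ q ∈ (Finset.Ico 1 N) ×ˢ (Finset.univ : Finset (Fin N)), f (D q.2 q.1)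
      = 2 * ∑ p ∈ Finset.univ.filter (fun p : Fin N × Fin N => p.1 < p.2),
          g (min |y p.1 - y p.2| (2 * Real.pi - |y p.1 - y p.2|)) := by
    rw [bij_lemma (fun p : Fin N × Fin N =>
        g (min |y p.1 - y p.2| (2 * Real.pi - |y p.1 - y p.2|)))
      (fun q : ℕ × Fin N => f (D q.2 q.1))
      (fun m hm j => perA m hm j)]
    exact doubling_lemma _ symF
  have hB : ∑ q ∈ (Finset.Ico 1 N) ×ˢ (Finset.univ : Finset (Fin N)),
        f (2 * Real.pi * q.1 / N)
      = 2 * ∑ p ∈ Finset.univ.filter (fun p : Fin N × Fin N => p.1 < p.2),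
          g ((2 * Real.pi / N) *
            ((min ((p.2 : ℕ) - (p.1 : ℕ)) (N - ((p.2 : ℕ) - (p.1 : ℕ))) : ℕ) : ℝ)) := by
    rw [bij_lemma (fun p : Fin N × Fin N => f (2 * Real.pi * ((p.2 - p.1 : Fin N) : ℕ) / N))
      (fun q : ℕ × Fin N => f (2 * Real.pi * q.1 / N))
      (fun m hm j => perB m hm j)]
    rw [doubling_lemma _ (fun a b => symG a b)]
    congr 1
    apply Finset.sum_congr rfl
    intro p hp
    simp only [Finset.mem_filter] at hp
    exact hGR p hp.2
  -- per-m comparison after product expansion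
  have hconst : ∀ m : ℕ, ∑ _j : Fin N, f (2 * Real.pi * m / N)
      = (N : ℝ) * f (2 * Real.pi * m / N) := by
    intro m
    rw [Finset.sum_const, Finset.card_univ, Fintype.card_fin, nsmul_eq_mul]
  have hTle : ∑ q ∈ (Finset.Ico 1 N) ×ˢ (Finset.univ : Finset (Fin N)),
        f (2 * Real.pi * q.1 / N)
      ≤ ∑ q ∈ (Finset.Ico 1 N) ×ˢ (Finset.univ : Finset (Fin N)), f (D q.2 q.1) := by
    rw [Finset.sum_product, Finset.sum_product]
    apply Finset.sum_le_sum
    intro m hm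
    rw [hconst m]
    exact hJ m hm
  constructor
  · have h2 : 2 * ∑ p ∈ Finset.univ.filter (fun p : Fin N × Fin N => p.1 < p.2),
          g ((2 * Real.pi / N) *
            ((min ((p.2 : ℕ) - (p.1 : ℕ)) (N - ((p.2 : ℕ) - (p.1 : ℕ))) : ℕ) : ℝ))
        ≤ 2 * ∑ p ∈ Finset.univ.filter (fun p : Fin N × Fin N => p.1 < p.2),
          g (min |y p.1 - y p.2| (2 * Real.pi - |y p.1 - y p.2|)) := by
      rw [← hA, ← hB]
      exact hTle
    linarith
  · intro hne
    rw [isEquidistant] at hne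
    push_neg at hne
    obtain ⟨j₀, hj₀⟩ := hne
    have hgap : ∀ j : Fin N, cyclicGap y j = D j 1 := fun j => rfl
    have hnc : ∃ j k : Fin N, D j 1 ≠ D k 1 := by
      by_contra hall
      push_neg at hall
      apply hj₀
      have hsum1 : ∑ j : Fin N, D j 1 = 2 * Real.pi := by
        rw [hDsum 1]; norm_num
      have hconst1 : ∑ j : Fin N, D j 1 = (N : ℝ) * D j₀ 1 := by
        rw [Finset.sum_congr rfl (fun j _ => hall j j₀), Finset.sum_const,
          Finset.card_univ, Fintype.card_fin, nsmul_eq_mul]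
      rw [hgap j₀]
      rw [hconst1] at hsum1
      field_simp
      linarith
    have hTlt : ∑ q ∈ (Finset.Ico 1 N) ×ˢ (Finset.univ : Finset (Fin N)),
          f (2 * Real.pi * q.1 / N)
        < ∑ q ∈ (Finset.Ico 1 N) ×ˢ (Finset.univ : Finset (Fin N)), f (D q.2 q.1) := by
      rw [Finset.sum_product, Finset.sum_product]
      apply Finset.sum_lt_sum
      · intro m hm
        rw [hconst m]
        exact hJ m hm
      · refine ⟨1, Finset.mem_Ico.mpr ⟨le_refl 1, hN1⟩, ?_⟩
        rw [hconst 1]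
        exact hJs hnc
    have h2 : 2 * ∑ p ∈ Finset.univ.filter (fun p : Fin N × Fin N => p.1 < p.2),
          g ((2 * Real.pi / N) *
            ((min ((p.2 : ℕ) - (p.1 : ℕ)) (N - ((p.2 : ℕ) - (p.1 : ℕ))) : ℕ) : ℝ))
        < 2 * ∑ p ∈ Finset.univ.filter (fun p : Fin N × Fin N => p.1 < p.2),
          g (min |y p.1 - y p.2| (2 * Real.pi - |y p.1 - y p.2|)) := by
      rw [← hA, ← hB]
      exact hTlt
    linarith
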